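/- arXiv:2105.13314 — 2 statements merged into one kernel-verified Lean document; each statement's English description precedes it below -/
import Mathlib

section
/- Let t > 0 and n = |x−y|₁ ≥ 1. Then e^{−t} Σ_{m ≥ n} 4^m Σ_{j ≥ m} t^j/j! ≤ exp{4t + n log(4t) − (n/2) log n + (n/2) log 2}. -/
open Finset in
private lemma nat_pow_le_factorial_sq (n : ℕ) : n ^ n ≤ (Nat.factorial n) ^ 2 := by
  have h1 : ∏ k ∈ range n, (n - k) = Nat.factorial n := by
    rw [← Finset.prod_range_add_one_eq_factorial n,
      ← Finset.prod_range_reflect (fun x => x + 1) n]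
    exact Finset.prod_congr rfl (fun k hk => by
      have := Finset.mem_range.mp hk; omega)
  have h2 : (Nat.factorial n) ^ 2 = ∏ k ∈ range n, (k + 1) * (n - k) := by
    rw [Finset.prod_mul_distrib, Finset.prod_range_add_one_eq_factorial, h1, sq]
  rw [h2]
  calc n ^ n = ∏ _k ∈ range n, n := by rw [Finset.prod_const, Finset.card_range]
    _ ≤ ∏ k ∈ range n, (k + 1) * (n - k) := by
        apply Finset.prod_le_prod' (h := ?_)
        intro k hk
        have hk' : k < n := Finset.mem_range.mp hk
        have h1k : 1 ≤ n - k := by omega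
        calc n = k + (n - k) := by omega
          _ ≤ k * (n - k) + (n - k) := by
              exact Nat.add_le_add_right (Nat.le_mul_of_pos_right k (by omega)) _
          _ = (k + 1) * (n - k) := by ring

private lemma real_exp_eq_tsum (x : ℝ) :
    Real.exp x = ∑' k : ℕ, x ^ k / (Nat.factorial k : ℝ) := by
  rw [Real.exp_eq_exp_ℝ, NormedSpace.exp_eq_tsum_div]

private lemma tsum_tail_le (x : ℝ) (hx : 0 ≤ x) (n : ℕ) :
    ∑' m : ℕ, (if n ≤ m then x ^ m / (Nat.factorial m : ℝ) else 0)
      ≤ x ^ n / (Nat.factorial n : ℝ) * Real.exp x := by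
  have hsum : Summable (fun m : ℕ => x ^ m / (Nat.factorial m : ℝ)) :=
    Real.summable_pow_div_factorial x
  have hnn : ∀ m : ℕ, 0 ≤ x ^ m / (Nat.factorial m : ℝ) := fun m => by positivity
  have hitenn : ∀ m : ℕ, 0 ≤ (if n ≤ m then x ^ m / (Nat.factorial m : ℝ) else 0) := by
    intro m; split
    exacts [hnn m, le_rfl]
  have hitele : ∀ m : ℕ, (if n ≤ m then x ^ m / (Nat.factorial m : ℝ) else 0)
      ≤ x ^ m / (Nat.factorial m : ℝ) := by
    intro m; split
    exacts [le_rfl, hnn m]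
  have hite : Summable (fun m : ℕ => if n ≤ m then x ^ m / (Nat.factorial m : ℝ) else 0) :=
    Summable.of_nonneg_of_le hitenn hitele hsum
  have key := Summable.sum_add_tsum_nat_add
    (f := fun m : ℕ => if n ≤ m then x ^ m / (Nat.factorial m : ℝ) else 0) n hite
  have hfin : (∑ i ∈ Finset.range n,
      (if n ≤ i then x ^ i / (Nat.factorial i : ℝ) else 0)) = 0 := by
    apply Finset.sum_eq_zero
    intro i hi
    rw [if_neg (by simpa using Finset.mem_range.mp hi)]
  rw [hfin, zero_add] at key
  rw [← key]
  have hshift : ∀ i : ℕ, (if n ≤ i + n then x ^ (i + n) / (Nat.factorial (i + n) : ℝ) else 0)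
      = x ^ (i + n) / (Nat.factorial (i + n) : ℝ) := fun i => if_pos (Nat.le_add_left n i)
  simp only [hshift]
  have hbound : ∀ i : ℕ, x ^ (i + n) / (Nat.factorial (i + n) : ℝ)
      ≤ x ^ n / (Nat.factorial n : ℝ) * (x ^ i / (Nat.factorial i : ℝ)) := by
    intro i
    have hfle : (Nat.factorial i : ℝ) * (Nat.factorial n : ℝ) ≤ (Nat.factorial (i + n) : ℝ) := by
      exact_mod_cast Nat.le_of_dvd (Nat.factorial_pos _)
        (Nat.factorial_mul_factorial_dvd_factorial_add i n)
    have h1 : x ^ (i + n) / (Nat.factorial (i + n) : ℝ)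
        ≤ x ^ (i + n) / ((Nat.factorial i : ℝ) * (Nat.factorial n : ℝ)) := by
      apply div_le_div_of_nonneg_left (pow_nonneg hx _) _ hfle
      positivity
    calc x ^ (i + n) / (Nat.factorial (i + n) : ℝ)
        ≤ x ^ (i + n) / ((Nat.factorial i : ℝ) * (Nat.factorial n : ℝ)) := h1
      _ = x ^ n / (Nat.factorial n : ℝ) * (x ^ i / (Nat.factorial i : ℝ)) := by
          rw [pow_add]; field_simp
  calc ∑' i : ℕ, x ^ (i + n) / (Nat.factorial (i + n) : ℝ)
      ≤ ∑' i : ℕ, x ^ n / (Nat.factorial n : ℝ) * (x ^ i / (Nat.factorial i : ℝ)) := by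
        apply Summable.tsum_le_tsum hbound
        · exact (summable_nat_add_iff n).mpr hsum
        · exact hsum.mul_left _
    _ = x ^ n / (Nat.factorial n : ℝ) * ∑' i : ℕ, x ^ i / (Nat.factorial i : ℝ) := tsum_mul_left
    _ = x ^ n / (Nat.factorial n : ℝ) * Real.exp x := by rw [real_exp_eq_tsum]

/-- Key analytic estimate in the light-cone lemma:
`e^{−t} Σ_{m ≥ n} 4^m Σ_{j ≥ m} t^j/j! ≤ exp{4t + n log(4t) − (n/2) log n + (n/2) log 2}`. -/
theorem stmt1 (t : ℝ) (ht : 0 < t) (n : ℕ) (hn : 1 ≤ n) :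
    Real.exp (-t) *
      ∑' m : ℕ, (if n ≤ m then
        (4 : ℝ) ^ m * ∑' j : ℕ, (if m ≤ j then t ^ j / (Nat.factorial j : ℝ) else 0)
      else 0)
    ≤ Real.exp (4 * t + n * Real.log (4 * t) - (n / 2 : ℝ) * Real.log n
        + (n / 2 : ℝ) * Real.log 2) := by
  have ht' : (0:ℝ) ≤ t := ht.le
  have h4t : (0:ℝ) < 4 * t := by linarith
  -- inner sum bound
  have hS : ∀ m : ℕ, ∑' j : ℕ, (if m ≤ j then t ^ j / (Nat.factorial j : ℝ) else 0)
      ≤ t ^ m / (Nat.factorial m : ℝ) * Real.exp t := fun m => tsum_tail_le t ht' m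
  have hSnn : ∀ m : ℕ, 0 ≤ ∑' j : ℕ, (if m ≤ j then t ^ j / (Nat.factorial j : ℝ) else 0) :=
    fun m => tsum_nonneg (fun j => by split <;> positivity)
  -- bound terms of outer sum
  have hterm : ∀ m : ℕ, (if n ≤ m then
      (4 : ℝ) ^ m * ∑' j : ℕ, (if m ≤ j then t ^ j / (Nat.factorial j : ℝ) else 0) else 0)
      ≤ (if n ≤ m then (4 * t) ^ m / (Nat.factorial m : ℝ) else 0) * Real.exp t := by
    intro m
    split
    · calc (4 : ℝ) ^ m * ∑' j : ℕ, (if m ≤ j then t ^ j / (Nat.factorial j : ℝ) else 0)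
          ≤ (4 : ℝ) ^ m * (t ^ m / (Nat.factorial m : ℝ) * Real.exp t) := by
            apply mul_le_mul_of_nonneg_left (hS m) (by positivity)
        _ = (4 * t) ^ m / (Nat.factorial m : ℝ) * Real.exp t := by
            rw [mul_pow]; ring
    · simp
  have htermnn : ∀ m : ℕ, 0 ≤ (if n ≤ m then
      (4 : ℝ) ^ m * ∑' j : ℕ, (if m ≤ j then t ^ j / (Nat.factorial j : ℝ) else 0) else 0) := by
    intro m; split
    · exact mul_nonneg (by positivity) (hSnn m)
    · exact le_refl 0
  -- summability of the majorant
  have hmajsum : Summable (fun m : ℕ =>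
      (if n ≤ m then (4 * t) ^ m / (Nat.factorial m : ℝ) else 0) * Real.exp t) := by
    apply Summable.mul_right
    have h1 : ∀ m : ℕ, 0 ≤ (if n ≤ m then (4 * t) ^ m / (Nat.factorial m : ℝ) else 0) := by
      intro m; split <;> positivity
    have h2 : ∀ m : ℕ, (if n ≤ m then (4 * t) ^ m / (Nat.factorial m : ℝ) else 0)
        ≤ (4 * t) ^ m / (Nat.factorial m : ℝ) := by
      intro m; split
      exacts [le_rfl, by positivity]
    exact Summable.of_nonneg_of_le h1 h2 (Real.summable_pow_div_factorial (4*t))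
  have houter : Summable (fun m : ℕ => (if n ≤ m then
      (4 : ℝ) ^ m * ∑' j : ℕ, (if m ≤ j then t ^ j / (Nat.factorial j : ℝ) else 0) else 0)) :=
    Summable.of_nonneg_of_le htermnn hterm hmajsum
  have hsum1 : ∑' m : ℕ, (if n ≤ m then
      (4 : ℝ) ^ m * ∑' j : ℕ, (if m ≤ j then t ^ j / (Nat.factorial j : ℝ) else 0) else 0)
      ≤ (4 * t) ^ n / (Nat.factorial n : ℝ) * Real.exp (4 * t) * Real.exp t := by
    calc _ ≤ ∑' m : ℕ, (if n ≤ m then (4 * t) ^ m / (Nat.factorial m : ℝ) else 0) * Real.exp t :=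
        Summable.tsum_le_tsum hterm houter hmajsum
      _ = (∑' m : ℕ, (if n ≤ m then (4 * t) ^ m / (Nat.factorial m : ℝ) else 0)) * Real.exp t :=
        tsum_mul_right
      _ ≤ (4 * t) ^ n / (Nat.factorial n : ℝ) * Real.exp (4 * t) * Real.exp t := by
        apply mul_le_mul_of_nonneg_right (tsum_tail_le (4*t) h4t.le n) (Real.exp_nonneg t)
  -- now LHS ≤ e^{-t} * ((4t)^n/n! * e^{4t} * e^t) = (4t)^n/n! * e^{4t}
  have hLHS : Real.exp (-t) *
      ∑' m : ℕ, (if n ≤ m then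
        (4 : ℝ) ^ m * ∑' j : ℕ, (if m ≤ j then t ^ j / (Nat.factorial j : ℝ) else 0) else 0)
      ≤ (4 * t) ^ n / (Nat.factorial n : ℝ) * Real.exp (4 * t) := by
    calc Real.exp (-t) * _ ≤ Real.exp (-t) *
        ((4 * t) ^ n / (Nat.factorial n : ℝ) * Real.exp (4 * t) * Real.exp t) :=
        mul_le_mul_of_nonneg_left hsum1 (Real.exp_nonneg _)
      _ = (4 * t) ^ n / (Nat.factorial n : ℝ) * Real.exp (4 * t) *
          (Real.exp (-t) * Real.exp t) := by ring
      _ = (4 * t) ^ n / (Nat.factorial n : ℝ) * Real.exp (4 * t) := by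
          rw [← Real.exp_add]; simp
  refine hLHS.trans ?_
  -- final: (4t)^n/n! * e^{4t} ≤ RHS
  have hnpos : (0:ℝ) < n := by exact_mod_cast hn
  have hfactpos : (0:ℝ) < (Nat.factorial n : ℝ) := by exact_mod_cast Nat.factorial_pos n
  rw [show (4 * t + n * Real.log (4 * t) - (n / 2 : ℝ) * Real.log n + (n / 2 : ℝ) * Real.log 2)
      = 4 * t + n * Real.log (4 * t) + (-((n / 2 : ℝ) * Real.log ((n:ℝ) / 2))) by
        rw [Real.log_div (by positivity) (by norm_num)]; ring]
  rw [Real.exp_add, Real.exp_add]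
  rw [show Real.exp ((n:ℕ) * Real.log (4 * t)) = (4 * t) ^ n by
    rw [← Real.exp_log h4t, ← Real.exp_nat_mul, Real.exp_log h4t]]
  set c : ℝ := (n : ℝ) / 2 with hc
  have hcpos : 0 < c := by positivity
  have hkey : Real.exp (c * Real.log c) ≤ (Nat.factorial n : ℝ) := by
    have hrpow : Real.exp (c * Real.log c) = c ^ c := by
      rw [Real.rpow_def_of_pos hcpos, mul_comm]
    rw [hrpow]
    have hsq : (c ^ c) ^ (2:ℕ) ≤ ((Nat.factorial n : ℝ)) ^ (2:ℕ) := by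
      have h1 : (c ^ c) ^ (2:ℕ) = c ^ (n:ℕ) := by
        rw [← Real.rpow_natCast (c ^ c) 2, ← Real.rpow_mul hcpos.le,
          show c * ((2:ℕ):ℝ) = (n:ℝ) by rw [hc]; push_cast; ring, Real.rpow_natCast]
      rw [h1]
      have h2 : c ^ (n:ℕ) ≤ ((n:ℝ)) ^ (n:ℕ) :=
        pow_le_pow_left₀ hcpos.le (by rw [hc]; linarith) n
      have h3 : ((n:ℝ)) ^ (n:ℕ) ≤ ((Nat.factorial n : ℝ)) ^ (2:ℕ) := by
        exact_mod_cast nat_pow_le_factorial_sq n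
      exact h2.trans h3
    exact (pow_le_pow_iff_left₀ (Real.rpow_nonneg hcpos.le _) hfactpos.le (by norm_num)).mp hsq
  rw [Real.exp_neg]
  have hinv : ((Nat.factorial n : ℝ))⁻¹ ≤ (Real.exp (c * Real.log c))⁻¹ :=
    inv_anti₀ (Real.exp_pos _) hkey
  calc (4 * t) ^ n / (Nat.factorial n : ℝ) * Real.exp (4 * t)
      = Real.exp (4 * t) * (4 * t) ^ n * ((Nat.factorial n : ℝ))⁻¹ := by
        rw [div_eq_mul_inv]; ring
    _ ≤ Real.exp (4 * t) * (4 * t) ^ n * (Real.exp (c * Real.log c))⁻¹ := by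
        apply mul_le_mul_of_nonneg_left hinv (by positivity)
end

section
/- Let p ∈ (0,1), let N ≥ 1 and let ω = (ω₁,…,ω_N) be i.i.d. Bernoulli(p) in {−1,1} (with P[ωᵢ = 1] = p). Let A ⊆ {−1,1}^N be an increasing event and S ⊆ {1,…,N} a set of coordinates. Say S is jointly pivotal for ω if setting all coordinates in S to −1 takes ω out of A while setting them all to +1 puts ω in A. Then P[S is jointly pivotal] ≤ (1/min(p,1−p))^{|S|} Σ_{x∈S} P[x is pivotal], where x is pivotal for ω if changing only coordinate x changes 1_A(ω). -/
open MeasureTheory ProbabilityTheory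

/-- Set all coordinates of `ω` in `S` to the value `b`. -/
def setOn {N : ℕ} (S : Finset (Fin N)) (b : Bool) (ω : Fin N → Bool) : Fin N → Bool :=
  fun i => if i ∈ S then b else ω i

open scoped ENNReal

namespace AG17

noncomputable def f (q : ℝ≥0∞) : Bool → ℝ≥0∞ := fun b => if b then q else 1 - q

noncomputable def w {N : ℕ} (q : ℝ≥0∞) (ω : Fin N → Bool) : ℝ≥0∞ := ∏ i, f q (ω i)

lemma measure_eq_sum {N : ℕ} (μ : Measure (Fin N → Bool)) (B : Set (Fin N → Bool)) :
    μ B = ∑ ω ∈ (Set.toFinite B).toFinset, μ {ω} := by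
  conv_lhs => rw [← (Set.toFinite B).coe_toFinset]
  rw [show ((Set.toFinite B).toFinset : Set (Fin N → Bool)) = ⋃ ω ∈ (Set.toFinite B).toFinset, {ω}
      from (Set.biUnion_of_singleton _).symm]
  rw [measure_biUnion_finset ?hd (fun b _ => measurableSet_singleton b)]
  exact fun a _ b _ hab => Set.disjoint_singleton.mpr hab

lemma w_update {N : ℕ} (q : ℝ≥0∞) (ω : Fin N → Bool) (x : Fin N) (c : Bool) :
    w q (Function.update ω x c) = f q c * ∏ i ∈ Finset.univ \ {x}, f q (ω i) := by
  unfold w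
  have h : ∀ j, f q (Function.update ω x c j)
      = Function.update (fun k => f q (ω k)) x (f q c) j := by
    intro j
    exact Function.apply_update (fun _ a => f q a) ω x c j
  rw [Finset.prod_congr rfl fun j _ => h j]
  exact Finset.prod_update_of_mem (Finset.mem_univ x) _ _

lemma w_eq {N : ℕ} (q : ℝ≥0∞) (τ : Fin N → Bool) (x : Fin N) :
    w q τ = f q (τ x) * ∏ i ∈ Finset.univ \ {x}, f q (τ i) := by
  conv_lhs => rw [← Function.update_eq_self x τ]
  exact w_update q τ x (τ x)

lemma f_add (q : ℝ≥0∞) (hq : q ≤ 1) (b : Bool) : f q b + f q (!b) = 1 := by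
  cases b <;> simp [f]
  · exact tsub_add_cancel_of_le hq
  · exact add_tsub_cancel_of_le hq

lemma bool_ne (a b : Bool) (h : ¬ a = b) : a = !b := by
  cases a <;> cases b <;> simp_all

lemma update_le {N : ℕ} {q C : ℝ≥0∞} (hq : q ≤ 1) (hC : ∀ b, 1 ≤ C * f q b)
    (μ : Measure (Fin N → Bool)) (hw : ∀ ω, μ {ω} = w q ω)
    (x : Fin N) (b : Bool) (B : Set (Fin N → Bool)) :
    μ ((fun ω => Function.update ω x b) ⁻¹' B) ≤ C * μ B := by
  classical
  rw [measure_eq_sum μ _, measure_eq_sum μ B]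
  simp only [hw]
  set P : Set (Fin N → Bool) := (fun ω => Function.update ω x b) ⁻¹' B with hP
  set s := (Set.toFinite P).toFinset with hs
  set t := (Set.toFinite B).toFinset with ht
  set t₁ := t.filter (fun ω => ω x = b) with ht₁
  have hsplit : ∑ ω ∈ s, w q ω
      = ∑ ω ∈ s.filter (fun ω => ω x = b), w q ω
        + ∑ ω ∈ s.filter (fun ω => ¬ ω x = b), w q ω :=
    (Finset.sum_filter_add_sum_filter_not s _ _).symm
  have hmem : ∀ ω, ω ∈ s ↔ Function.update ω x b ∈ B := by
    intro ω; simp [hs, hP, Set.Finite.mem_toFinset]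
  have hmemt : ∀ ω, ω ∈ t₁ ↔ ω ∈ B ∧ ω x = b := by
    intro ω; simp [ht₁, ht, Set.Finite.mem_toFinset]
  -- first piece: s.filter (·x = b) = t₁
  have h1 : s.filter (fun ω => ω x = b) = t₁ := by
    ext ω
    rw [Finset.mem_filter, hmem, hmemt]
    constructor
    · rintro ⟨h, hx⟩
      rw [show b = ω x from hx.symm, Function.update_eq_self] at h
      exact ⟨h, hx⟩
    · rintro ⟨h, hx⟩
      refine ⟨?_, hx⟩
      rwa [show b = ω x from hx.symm, Function.update_eq_self]
  -- second piece: reindex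
  have h2 : ∑ ω ∈ s.filter (fun ω => ¬ ω x = b), w q ω
      = ∑ τ ∈ t₁, w q (Function.update τ x (!b)) := by
    apply Finset.sum_nbij' (i := fun ω => Function.update ω x b)
      (j := fun τ => Function.update τ x (!b))
    · intro ω hω
      rw [Finset.mem_filter, hmem] at hω
      rw [hmemt]
      exact ⟨hω.1, Function.update_self _ _ _⟩
    · intro τ hτ
      rw [hmemt] at hτ
      rw [Finset.mem_filter, hmem]
      constructor
      · rw [Function.update_idem, show b = τ x from hτ.2.symm, Function.update_eq_self]
        exact hτ.1
      · simp
    · intro ω hω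
      rw [Finset.mem_filter] at hω
      have : ω x = !b := bool_ne _ _ hω.2
      rw [Function.update_idem, ← this, Function.update_eq_self]
    · intro τ hτ
      rw [hmemt] at hτ
      rw [Function.update_idem, ← hτ.2, Function.update_eq_self]
    · intro ω hω
      rw [Finset.mem_filter] at hω
      have : ω x = !b := bool_ne _ _ hω.2
      rw [Function.update_idem, ← this, Function.update_eq_self]
  have hpt : ∀ τ ∈ t₁, w q τ + w q (Function.update τ x (!b)) ≤ C * w q τ := by
    intro τ hτ
    rw [hmemt] at hτ
    rw [w_eq q τ x, w_update, hτ.2, ← add_mul, f_add q hq b, one_mul]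
    calc (∏ i ∈ Finset.univ \ {x}, f q (τ i))
        ≤ (C * f q b) * ∏ i ∈ Finset.univ \ {x}, f q (τ i) := by
          conv_lhs => rw [← one_mul (∏ i ∈ Finset.univ \ {x}, f q (τ i))]
          exact mul_le_mul_left (hC b) _
      _ = C * (f q b * ∏ i ∈ Finset.univ \ {x}, f q (τ i)) := by ring
  calc ∑ ω ∈ s, w q ω
      = ∑ τ ∈ t₁, (w q τ + w q (Function.update τ x (!b))) := by
        rw [hsplit, h1, h2, Finset.sum_add_distrib]
    _ ≤ ∑ τ ∈ t₁, C * w q τ := Finset.sum_le_sum hpt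
    _ = C * ∑ τ ∈ t₁, w q τ := by rw [Finset.mul_sum]
    _ ≤ C * ∑ τ ∈ t, w q τ := by
        exact mul_le_mul_right (Finset.sum_le_sum_of_subset (Finset.filter_subset _ _)) _

lemma setOn_insert {N : ℕ} (T : Finset (Fin N)) (x : Fin N) (b : Bool) :
    setOn (insert x T) b = fun ω => setOn T b (Function.update ω x b) := by
  funext ω i
  by_cases h : i = x
  · subst h; simp [setOn, Function.update]
  · simp [setOn, Function.update, h]

lemma setOn_le {N : ℕ} {q C : ℝ≥0∞} (hq : q ≤ 1) (hC : ∀ b, 1 ≤ C * f q b)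
    (μ : Measure (Fin N → Bool)) (hw : ∀ ω, μ {ω} = w q ω)
    (S : Finset (Fin N)) (b : Bool) (B : Set (Fin N → Bool)) :
    μ (setOn S b ⁻¹' B) ≤ C ^ S.card * μ B := by
  classical
  induction S using Finset.induction_on with
  | empty =>
    have : setOn (∅ : Finset (Fin N)) b = id := by funext ω i; simp [setOn]
    simp [this]
  | @insert x T hx IH =>
    have hcomp : setOn (insert x T) b ⁻¹' B
        = (fun ω => Function.update ω x b) ⁻¹' (setOn T b ⁻¹' B) := by
      rw [setOn_insert]; rfl
    calc μ (setOn (insert x T) b ⁻¹' B)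
        ≤ C * μ (setOn T b ⁻¹' B) := by
          rw [hcomp]; exact update_le hq hC μ hw x b _
      _ ≤ C * (C ^ T.card * μ B) := mul_le_mul_right IH _
      _ = C ^ (insert x T).card * μ B := by
          rw [Finset.card_insert_of_notMem hx, pow_succ]; ring

lemma main_ind {N : ℕ} {q C : ℝ≥0∞} (hq : q ≤ 1) (hC : ∀ b, 1 ≤ C * f q b)
    (μ : Measure (Fin N → Bool)) (hw : ∀ ω, μ {ω} = w q ω)
    (A : Set (Fin N → Bool)) (S : Finset (Fin N)) :
    μ {ω | setOn S false ω ∉ A ∧ setOn S true ω ∈ A}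
      ≤ C ^ S.card *
        ∑ x ∈ S, μ {ω | Function.update ω x false ∉ A ∧ Function.update ω x true ∈ A} := by
  classical
  induction S using Finset.induction_on with
  | empty =>
    have h : setOn (∅ : Finset (Fin N)) false = id ∧ setOn (∅ : Finset (Fin N)) true = id := by
      constructor <;> (funext ω i; simp [setOn])
    rw [h.1, h.2]
    simp only [id]
    have : {ω : Fin N → Bool | ω ∉ A ∧ ω ∈ A} = ∅ := by
      ext ω
      simp only [Set.mem_setOf_eq, Set.mem_empty_iff_false, iff_false]
      tauto
    simp [this]
  | @insert x T hx IH =>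
    set Piv : Fin N → Set (Fin N → Bool) :=
      fun y => {ω | Function.update ω y false ∉ A ∧ Function.update ω y true ∈ A} with hPiv
    set E₁ := setOn (insert x T) false ⁻¹' (Piv x) with hE₁
    set E₂ := (fun ω => Function.update ω x true) ⁻¹'
      {ω | setOn T false ω ∉ A ∧ setOn T true ω ∈ A} with hE₂
    have key1 : ∀ ω : Fin N → Bool, setOn T false (Function.update ω x true)
        = Function.update (setOn (insert x T) false ω) x true := by
      intro ω; funext i
      by_cases h : i = x
      · subst h; simp [setOn, Function.update, hx]
      · simp [setOn, Function.update, h]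
    have key2 : ∀ ω : Fin N → Bool, setOn T true (Function.update ω x true)
        = setOn (insert x T) true ω := by
      intro ω; funext i
      by_cases h : i = x
      · subst h; simp [setOn, Function.update, hx]
      · simp [setOn, Function.update, h]
    have hσx : ∀ ω : Fin N → Bool, setOn (insert x T) false ω x = false := by
      intro ω; simp [setOn]
    have hsub : {ω | setOn (insert x T) false ω ∉ A ∧ setOn (insert x T) true ω ∈ A}
        ⊆ E₁ ∪ E₂ := by
      rintro ω ⟨h0, h1⟩
      by_cases hc : Function.update (setOn (insert x T) false ω) x true ∈ A
      · left
        refine ⟨?_, hc⟩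
        have heq : Function.update (setOn (insert x T) false ω) x false
            = setOn (insert x T) false ω := by
          funext i
          by_cases h : i = x
          · subst h; simp [Function.update, setOn]
          · simp [Function.update, h]
        rw [heq]
        exact h0
      · right
        refine ⟨?_, ?_⟩
        · rw [key1]; exact hc
        · rw [key2]; exact h1
    have h1 : μ E₁ ≤ C ^ (insert x T).card * μ (Piv x) := setOn_le hq hC μ hw _ _ _
    have h2 : μ E₂ ≤ C * (C ^ T.card * ∑ y ∈ T, μ (Piv y)) := by
      calc μ E₂ ≤ C * μ {ω | setOn T false ω ∉ A ∧ setOn T true ω ∈ A} :=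
            update_le hq hC μ hw x true _
        _ ≤ C * (C ^ T.card * ∑ y ∈ T, μ (Piv y)) := mul_le_mul_right IH _
    calc μ {ω | setOn (insert x T) false ω ∉ A ∧ setOn (insert x T) true ω ∈ A}
        ≤ μ (E₁ ∪ E₂) := measure_mono hsub
      _ ≤ μ E₁ + μ E₂ := measure_union_le _ _
      _ ≤ C ^ (insert x T).card * μ (Piv x)
            + C * (C ^ T.card * ∑ y ∈ T, μ (Piv y)) := add_le_add h1 h2
      _ = C ^ (insert x T).card * ∑ y ∈ insert x T, μ (Piv y) := by
          rw [Finset.sum_insert hx, Finset.card_insert_of_notMem hx, pow_succ]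
          ring

end AG17


/-- Single-site extraction step of the Aizenman–Grimmett argument: for product
Bernoulli(p) measure, an increasing event `A` and a set `S` of coordinates,
`P[S jointly pivotal] ≤ (1/min(p,1−p))^{|S|} Σ_{x∈S} P[x pivotal]`. -/
theorem stmt17 (p : ℝ) (hp : p ∈ Set.Ioo (0 : ℝ) 1) (N : ℕ) (hN : 1 ≤ N)
    (μ : Measure (Fin N → Bool))
    (hμ : μ = Measure.pi (fun _ =>
      (PMF.bernoulli (Real.toNNReal p) (by
        simpa using Real.toNNReal_le_one.mpr hp.2.le)).toMeasure))
    (A : Set (Fin N → Bool))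
    (hA : ∀ ω ω' : Fin N → Bool, ω ∈ A → (∀ i, ω i ≤ ω' i) → ω' ∈ A)
    (S : Finset (Fin N)) :
    μ {ω | setOn S false ω ∉ A ∧ setOn S true ω ∈ A}
      ≤ ENNReal.ofReal ((1 / min p (1 - p)) ^ S.card) *
        ∑ x ∈ S, μ {ω | Function.update ω x false ∉ A ∧ Function.update ω x true ∈ A} := by
  set q : ℝ≥0∞ := ENNReal.ofReal p with hqdef
  set m : ℝ := min p (1 - p) with hm
  have hm0 : 0 < m := lt_min hp.1 (by linarith [hp.2])
  set C : ℝ≥0∞ := ENNReal.ofReal (1 / m) with hCdef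
  have hq : q ≤ 1 := by rw [hqdef]; exact ENNReal.ofReal_le_one.mpr hp.2.le
  have hsub : (1 : ℝ≥0∞) - q = ENNReal.ofReal (1 - p) := by
    rw [ENNReal.ofReal_sub _ hp.1.le, ENNReal.ofReal_one]
  have hC : ∀ b, 1 ≤ C * AG17.f q b := by
    intro b
    cases b
    · have : C * AG17.f q false = ENNReal.ofReal ((1 / m) * (1 - p)) := by
        rw [show AG17.f q false = (1 : ℝ≥0∞) - q from rfl, hsub, hCdef,
          ENNReal.ofReal_mul (by positivity)]
      rw [this]
      rw [ENNReal.one_le_ofReal]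
      rw [one_div_mul_eq_div]
      rw [le_div_iff₀ hm0, one_mul]
      exact min_le_right _ _
    · have : C * AG17.f q true = ENNReal.ofReal ((1 / m) * p) := by
        rw [show AG17.f q true = q from rfl, hqdef, hCdef,
          ENNReal.ofReal_mul (by positivity)]
      rw [this]
      rw [ENNReal.one_le_ofReal]
      rw [one_div_mul_eq_div]
      rw [le_div_iff₀ hm0, one_mul]
      exact min_le_left _ _
  have hw : ∀ ω : Fin N → Bool, μ {ω} = AG17.w q ω := by
    intro ω
    rw [hμ, ← Set.univ_pi_singleton ω, Measure.pi_pi]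
    refine Finset.prod_congr rfl fun i _ => ?_
    rw [PMF.toMeasure_apply_singleton _ _ (measurableSet_singleton _), PMF.bernoulli_apply]
    cases ω i <;> simp [AG17.f] <;> rfl
  have hcoef : ENNReal.ofReal ((1 / m) ^ S.card) = C ^ S.card :=
    ENNReal.ofReal_pow (by positivity) _
  rw [hcoef]
  exact AG17.main_ind hq hC μ hw A S
end
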